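/- Let ν be a finite positive Borel measure on ℝ, F(z) = ∫ (1+tz)/(t-z) dν(t), and let t₀ ∈ ℝ. Then lim_{y→0+} (-i y)·F(t₀ + iy) = (1 + t₀²)·ν({t₀}). -/

import Mathlib

open MeasureTheory Filter

/-- Point masses from boundary asymptotics: for a finite Borel measure `ν` on `ℝ`,
`F(z) = ∫ (1+tz)/(t-z) dν(t)`, and `t₀ ∈ ℝ`, one has
`lim_{y→0+} (-iy)·F(t₀+iy) = (1+t₀²)·ν({t₀})`. -/
theorem stmt7 (ν : Measure ℝ) [IsFiniteMeasure ν] (t₀ : ℝ) :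
    Filter.Tendsto
      (fun y : ℝ => (-Complex.I * (y : ℂ)) *
        ∫ t : ℝ, (1 + (t : ℂ) * ((t₀ : ℂ) + (y : ℂ) * Complex.I)) /
          ((t : ℂ) - ((t₀ : ℂ) + (y : ℂ) * Complex.I)) ∂ν)
      (nhdsWithin 0 (Set.Ioi 0))
      (nhds (((1 + t₀ ^ 2) * (ν {t₀}).toReal : ℝ) : ℂ)) := by
  have hmeas : MeasurableSet ({t₀} : Set ℝ) := measurableSet_singleton t₀
  have hint : ∫ t : ℝ, Set.indicator {t₀} (fun _ => (1 + (t₀:ℂ)^2)) t ∂ν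
      = (((1 + t₀ ^ 2) * (ν {t₀}).toReal : ℝ) : ℂ) := by
    rw [MeasureTheory.integral_indicator_const _ hmeas, Complex.real_smul]
    push_cast
    rw [measureReal_def]
    ring
  rw [← hint]
  have key : Tendsto
      (fun y : ℝ => ∫ t : ℝ, (-Complex.I * (y : ℂ)) *
        ((1 + (t : ℂ) * ((t₀ : ℂ) + (y : ℂ) * Complex.I)) /
          ((t : ℂ) - ((t₀ : ℂ) + (y : ℂ) * Complex.I))) ∂ν)
      (nhdsWithin (0:ℝ) (Set.Ioi 0))
      (nhds (∫ t : ℝ, Set.indicator {t₀} (fun _ => (1 + (t₀:ℂ)^2)) t ∂ν)) := by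
    apply tendsto_integral_filter_of_dominated_convergence
      (fun _ => (1 + (|t₀| + 1)^2 : ℝ))
    · filter_upwards [self_mem_nhdsWithin] with y hy
      have m1 : Measurable fun t : ℝ => ((t : ℂ)) := Complex.measurable_ofReal
      exact (measurable_const.mul ((measurable_const.add (m1.mul measurable_const)).div
        (m1.sub measurable_const))).aestronglyMeasurable
    · filter_upwards [Ioo_mem_nhdsGT_of_mem (by simp : (0:ℝ) ∈ Set.Ico 0 1)] with y hy
      apply ae_of_all
      intro t
      obtain ⟨hy0, hy1⟩ := hy
      set z : ℂ := (t₀ : ℂ) + (y : ℂ) * Complex.I with hz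
      have him : ((t:ℂ) - z).im = -y := by simp [hz]
      have hre : ((t:ℂ) - z).re = t - t₀ := by simp [hz]
      have hDy : y ≤ ‖(t:ℂ) - z‖ := by
        have h := Complex.abs_im_le_norm ((t:ℂ) - z)
        rw [him, abs_neg, abs_of_pos hy0] at h
        exact h
      have hDs : |t - t₀| ≤ ‖(t:ℂ) - z‖ := by
        have h := Complex.abs_re_le_norm ((t:ℂ) - z)
        rw [hre] at h
        exact h
      have hDpos : 0 < ‖(t:ℂ) - z‖ := lt_of_lt_of_le hy0 hDy
      have hzn : ‖z‖ ≤ |t₀| + 1 := by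
        calc ‖z‖ ≤ ‖(t₀:ℂ)‖ + ‖(y:ℂ) * Complex.I‖ := norm_add_le _ _
        _ = |t₀| + |y| := by simp
        _ ≤ |t₀| + 1 := by rw [abs_of_pos hy0]; linarith
      have hA : ‖1 + (t:ℂ) * z‖ ≤ 1 + |t| * (|t₀| + 1) := by
        calc ‖1 + (t:ℂ) * z‖ ≤ ‖(1:ℂ)‖ + ‖(t:ℂ)‖ * ‖z‖ := by
              refine (norm_add_le _ _).trans ?_
              rw [norm_mul]
        _ = 1 + |t| * ‖z‖ := by simp
        _ ≤ 1 + |t| * (|t₀| + 1) := by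
              have := abs_nonneg t
              nlinarith
      have ht : |t| ≤ |t - t₀| + |t₀| := by
        calc |t| = |t - t₀ + t₀| := by ring_nf
        _ ≤ _ := abs_add_le _ _
      have hnorm : ‖-Complex.I * (y:ℂ) * ((1 + (t:ℂ) * z) / ((t:ℂ) - z))‖
          = y * (‖1 + (t:ℂ) * z‖ / ‖(t:ℂ) - z‖) := by
        rw [norm_mul, norm_div, norm_mul]
        simp [abs_of_pos hy0]
      rw [hnorm, mul_div_assoc', div_le_iff₀ hDpos]
      have hAn : (0:ℝ) ≤ ‖1 + (t:ℂ) * z‖ := norm_nonneg _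
      have h0 : (0:ℝ) ≤ |t₀| := abs_nonneg t₀
      have h1 : (0:ℝ) ≤ |t - t₀| := abs_nonneg _
      have e0 : ‖1 + (t:ℂ) * z‖ ≤ 1 + (|t - t₀| + |t₀|) * (|t₀| + 1) := by nlinarith
      have e1 : y * ‖1 + (t:ℂ) * z‖ ≤ y * (1 + (|t - t₀| + |t₀|) * (|t₀| + 1)) :=
        mul_le_mul_of_nonneg_left e0 hy0.le
      have e2 : y * |t - t₀| ≤ ‖(t:ℂ) - z‖ := by nlinarith
      have e3 : y * |t₀| ≤ ‖(t:ℂ) - z‖ * |t₀| := mul_le_mul_of_nonneg_right hDy h0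
      nlinarith [mul_le_mul_of_nonneg_right e2 (show (0:ℝ) ≤ |t₀| + 1 by linarith),
        mul_le_mul_of_nonneg_right e3 (show (0:ℝ) ≤ |t₀| + 1 by linarith), e1]
    · exact integrable_const _
    · apply ae_of_all
      intro t
      by_cases ht : t = t₀
      · subst ht
        rw [Set.indicator_of_mem (Set.mem_singleton t)]
        have hcong : ∀ᶠ y : ℝ in nhdsWithin 0 (Set.Ioi 0),
            (1 + (t:ℂ)^2 + (t:ℂ) * y * Complex.I)
            = -Complex.I * (y:ℂ) *
              ((1 + (t : ℂ) * ((t : ℂ) + (y : ℂ) * Complex.I)) /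
                ((t : ℂ) - ((t : ℂ) + (y : ℂ) * Complex.I))) := by
          filter_upwards [self_mem_nhdsWithin] with y hy
          have hy0 : (0:ℝ) < y := hy
          have hyne : ((y:ℂ)) ≠ 0 := by
            exact_mod_cast ne_of_gt hy0
          field_simp
          ring
        refine Tendsto.congr' hcong ?_
        have hc : Continuous fun y : ℝ => (1 + (t:ℂ)^2 + (t:ℂ) * (y:ℂ) * Complex.I) :=
          continuous_const.add ((continuous_const.mul Complex.continuous_ofReal).mul
            continuous_const)
        have h := (hc.tendsto (0:ℝ)).mono_left (nhdsWithin_le_nhds (s := Set.Ioi 0))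
        simpa using h
      · rw [Set.indicator_of_notMem (by simpa using ht)]
        have htne : ((t:ℂ) - (t₀:ℂ)) ≠ 0 := by
          rw [sub_ne_zero]
          exact_mod_cast ht
        have h1 : Tendsto (fun y : ℝ => (-Complex.I * (y:ℂ))) (nhdsWithin 0 (Set.Ioi 0))
            (nhds 0) := by
          have hc : Continuous fun y : ℝ => (-Complex.I * (y:ℂ)) :=
            continuous_const.mul Complex.continuous_ofReal
          have h := (hc.tendsto (0:ℝ)).mono_left (nhdsWithin_le_nhds (s := Set.Ioi 0))
          simpa using h
        have h2 : Tendsto (fun y : ℝ => (1 + (t : ℂ) * ((t₀ : ℂ) + (y : ℂ) * Complex.I)))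
            (nhdsWithin 0 (Set.Ioi 0)) (nhds (1 + (t:ℂ) * (t₀:ℂ))) := by
          have hc : Continuous fun y : ℝ => (1 + (t : ℂ) * ((t₀ : ℂ) + (y : ℂ) * Complex.I)) :=
            continuous_const.add (continuous_const.mul (continuous_const.add
              (Complex.continuous_ofReal.mul continuous_const)))
          have h := (hc.tendsto (0:ℝ)).mono_left (nhdsWithin_le_nhds (s := Set.Ioi 0))
          simpa using h
        have h3 : Tendsto (fun y : ℝ => ((t : ℂ) - ((t₀ : ℂ) + (y : ℂ) * Complex.I)))
            (nhdsWithin 0 (Set.Ioi 0)) (nhds ((t:ℂ) - (t₀:ℂ))) := by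
          have hc : Continuous fun y : ℝ => ((t : ℂ) - ((t₀ : ℂ) + (y : ℂ) * Complex.I)) :=
            continuous_const.sub (continuous_const.add
              (Complex.continuous_ofReal.mul continuous_const))
          have h := (hc.tendsto (0:ℝ)).mono_left (nhdsWithin_le_nhds (s := Set.Ioi 0))
          simpa using h
        have := h1.mul (h2.div h3 htne)
        simpa using this
  simp only [MeasureTheory.integral_const_mul] at key
  exact key
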